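/- Let (N, m0, l, A) be a labeled Petri net system with transitions partitioned into explicit transitions T_E and implicit transitions T_I such that the T_I-induced subnet is acyclic, and let G be its basis reachability graph. For every σ ∈ L(G), there exists a firing sequence s ∈ L(N, m0) with P_E(s) = φ(σ) and π(P_I(s)) = φ'(σ). -/

import Mathlib

open scoped BigOperators

/-- A Petri net on places `P` and transitions `T`, given by its `Pre` and `Post` matrices. -/
structure PetriNet (P T : Type) where
  Pre : P → T → ℕ
  Post : P → T → ℕ

namespace PetriNet

variable {P T A : Type}

/-- Incidence matrix `[N] = Post - Pre` (with values in ℤ). -/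
def inc (N : PetriNet P T) (p : P) (t : T) : ℤ :=
  (N.Post p t : ℤ) - (N.Pre p t : ℤ)

/-- Transition `t` is enabled at marking `m`. -/
def enabled (N : PetriNet P T) (m : P → ℕ) (t : T) : Prop :=
  ∀ p, N.Pre p t ≤ m p

/-- Marking obtained by firing `t` at `m`. -/
def fire (N : PetriNet P T) (m : P → ℕ) (t : T) : P → ℕ :=
  fun p => m p - N.Pre p t + N.Post p t

/-- `FireSeq N m s m'` means the sequence `s` is enabled at `m` and its firing yields `m'`,
written `m[s⟩m'`. -/
inductive FireSeq (N : PetriNet P T) : (P → ℕ) → List T → (P → ℕ) → Prop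
  | nil (m : P → ℕ) : FireSeq N m [] m
  | cons {m m' : P → ℕ} {t : T} {s : List T} :
      N.enabled m t → FireSeq N (N.fire m t) s m' → FireSeq N m (t :: s) m'

/-- `L(N, m0)`: the set of firing sequences enabled at `m0`. -/
def lang (N : PetriNet P T) (m0 : P → ℕ) : Set (List T) :=
  {s | ∃ m', N.FireSeq m0 s m'}

/-- `R(N, m0)`: the set of markings reachable from `m0`. -/
def reach (N : PetriNet P T) (m0 : P → ℕ) : Set (P → ℕ) :=
  {m | ∃ s, N.FireSeq m0 s m}

/-- A Petri net system is bounded if reachable markings are uniformly bounded. -/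
def Bounded (N : PetriNet P T) (m0 : P → ℕ) : Prop :=
  ∃ k : ℕ, ∀ m ∈ N.reach m0, ∀ p, m p ≤ k

/-- The `TL`-induced subnet: same places, transitions restricted to `TL`. -/
def restrict (N : PetriNet P T) (TL : Set T) : PetriNet P {t // t ∈ TL} where
  Pre := fun p t => N.Pre p t.1
  Post := fun p t => N.Post p t.1

/-- Parikh vector of a sequence. -/
def parikh [DecidableEq T] (s : List T) : T → ℕ := fun t => s.count t

/-- Projection of a sequence onto a subset `TL` of transitions (erasing the others). -/
def projSeq (TL : Set T) [DecidablePred (· ∈ TL)] (s : List T) : List T :=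
  s.filter (fun t => decide (t ∈ TL))

/-- Σ(m,t): explanations of `t` at `m`, i.e. sequences of implicit (`TI`) transitions whose
firing at `m` enables `t`. -/
def explanations (N : PetriNet P T) (TI : Set T) (m : P → ℕ) (t : T) : Set (List T) :=
  {s | (∀ u ∈ s, u ∈ TI) ∧ ∃ m', N.FireSeq m s m' ∧ N.enabled m' t}

/-- Y(m,t): e-vectors, Parikh vectors of explanations. -/
def eVectors [DecidableEq T] (N : PetriNet P T) (TI : Set T) (m : P → ℕ) (t : T) :
    Set (T → ℕ) :=
  parikh '' N.explanations TI m t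

/-- Y_min(m,t): componentwise-minimal e-vectors. -/
def eVectorsMin [DecidableEq T] (N : PetriNet P T) (TI : Set T) (m : P → ℕ) (t : T) :
    Set (T → ℕ) :=
  {y ∈ N.eVectors TI m t | ∀ y' ∈ N.eVectors TI m t, y' ≤ y → y' = y}

/-- Σ_min(m,t): explanations with no explanation of strictly smaller Parikh vector. -/
def explanationsMin [DecidableEq T] (N : PetriNet P T) (TI : Set T) (m : P → ℕ) (t : T) :
    Set (List T) :=
  {s ∈ N.explanations TI m t |
    ¬ ∃ s' ∈ N.explanations TI m t, parikh s' ≤ parikh s ∧ parikh s' ≠ parikh s}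

/-- Paths of the basis reachability graph: `(m,(t,y),m')` is an arc whenever `t ∈ TE`,
`y ∈ Y_min(m,t)` and `m' = m + [N]_I·y + [N](·,t)` (the vector `y` is supported on `TI`,
so the sum over all transitions equals the sum over `TI`). -/
inductive BrgPath [DecidableEq T] [Fintype T] (N : PetriNet P T) (TE TI : Set T) :
    (P → ℕ) → List (T × (T → ℕ)) → (P → ℕ) → Prop
  | nil (m : P → ℕ) : BrgPath N TE TI m [] m
  | cons {m m' m'' : P → ℕ} {t : T} {y : T → ℕ} {σ : List (T × (T → ℕ))} :
      t ∈ TE → y ∈ N.eVectorsMin TI m t →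
      (∀ p, (m' p : ℤ) = (m p : ℤ) + (∑ u, (y u : ℤ) * N.inc p u) + N.inc p t) →
      BrgPath N TE TI m' σ m'' → BrgPath N TE TI m ((t, y) :: σ) m''

/-- `L(G)`: the language of the basis reachability graph. -/
def brgLang [DecidableEq T] [Fintype T] (N : PetriNet P T) (TE TI : Set T) (m0 : P → ℕ) :
    Set (List (T × (T → ℕ))) :=
  {σ | ∃ m', BrgPath N TE TI m0 σ m'}

/-- The set of basis markings: states of the BRG reachable from `m0`. -/
def brgStates [DecidableEq T] [Fintype T] (N : PetriNet P T) (TE TI : Set T) (m0 : P → ℕ) :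
    Set (P → ℕ) :=
  {m | ∃ σ, BrgPath N TE TI m0 σ m}

/-- φ(σ): concatenation of the first entries of the arcs of σ. -/
def phi (σ : List (T × (T → ℕ))) : List T := σ.map Prod.fst

/-- φ'(σ): sum of the second entries of the arcs of σ. -/
def phi' (σ : List (T × (T → ℕ))) : T → ℕ := (σ.map Prod.snd).sum

/-- Arcs of the directed bipartite graph of the `TI`-induced subnet on `P ⊕ T`. -/
def subnetArc (N : PetriNet P T) (TI : Set T) : (P ⊕ T) → (P ⊕ T) → Prop
  | Sum.inl p, Sum.inr t => t ∈ TI ∧ 0 < N.Pre p t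
  | Sum.inr t, Sum.inl p => t ∈ TI ∧ 0 < N.Post p t
  | _, _ => False

/-- The `TI`-induced subnet is acyclic: no cycle in its directed bipartite graph. -/
def SubnetAcyclic (N : PetriNet P T) (TI : Set T) : Prop :=
  ∀ x : P ⊕ T, ¬ Relation.TransGen (N.subnetArc TI) x x

/-- `L(N_L, m0)` viewed as a set of sequences over `T` (via the inclusion `T_L ↪ T`). -/
def lowLang (N : PetriNet P T) (TL : Set T) (m0 : P → ℕ) : Set (List T) :=
  (fun s => s.map Subtype.val) '' (N.restrict TL).lang m0

/-- `l_L(L(N_L, m0))`: the label language of the low-level subnet system. -/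
def lowLabelLang (N : PetriNet P T) (l : T → A) (TL : Set T) (m0 : P → ℕ) : Set (List A) :=
  (fun s => s.map fun t => l t.1) '' (N.restrict TL).lang m0

/-- SNNI: `l(P_L(L(N,m0))) = l_L(L(N_L,m0))`, where `T_L = {t | l t ∈ A_L}`. -/
def SNNI (N : PetriNet P T) (m0 : P → ℕ) (l : T → A) (AL : Set A)
    [DecidablePred fun t => l t ∈ AL] : Prop :=
  (fun s => (s.filter fun t => decide (l t ∈ AL)).map l) '' N.lang m0 =
    N.lowLabelLang l {t | l t ∈ AL} m0

end PetriNet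

namespace PetriNet

variable {P T : Type}

theorem fireSeq_append {N : PetriNet P T} {m m₁ m₂ : P → ℕ} {s s' : List T}
    (h : N.FireSeq m s m₁) (h' : N.FireSeq m₁ s' m₂) : N.FireSeq m (s ++ s') m₂ := by
  induction h with
  | nil => simpa using h'
  | cons he _ ih => exact FireSeq.cons he (ih h')

theorem marking_eq [Fintype T] [DecidableEq T] {N : PetriNet P T} {m m₁ : P → ℕ}
    {s : List T} (h : N.FireSeq m s m₁) :
    ∀ p, (m₁ p : ℤ) = (m p : ℤ) + ∑ u, (s.count u : ℤ) * N.inc p u := by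
  induction h with
  | nil => intro p; simp
  | @cons m m' t s he _ ih =>
      intro p
      have hfire : ((N.fire m t) p : ℤ) = (m p : ℤ) + N.inc p t := by
        simp only [fire, inc]
        push_cast [Nat.sub_add_cancel (he p), Nat.cast_sub (he p)]
        ring
      have hsum : ∑ u, (((t :: s).count u : ℕ) : ℤ) * N.inc p u =
          (∑ u, (s.count u : ℤ) * N.inc p u) + N.inc p t := by
        have : ∀ u : T, (((t :: s).count u : ℕ) : ℤ) * N.inc p u =
            (s.count u : ℤ) * N.inc p u + (if u = t then N.inc p u else 0) := by
          intro u
          simp only [List.count_cons]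
          by_cases hu : u = t
          · simp [hu]; ring
          · simp [hu, Ne.symm hu]
        rw [Finset.sum_congr rfl (fun u _ => this u), Finset.sum_add_distrib]
        simp
      rw [hsum, ih p, hfire]; ring

theorem brg_realize [Fintype T] [DecidableEq T] (N : PetriNet P T) (TE TI : Set T)
    [DecidablePred (· ∈ TE)] [DecidablePred (· ∈ TI)] (hdisj : Disjoint TE TI)
    {m mend : P → ℕ} {σ : List (T × (T → ℕ))} (h : BrgPath N TE TI m σ mend) :
    ∃ s, N.FireSeq m s mend ∧ projSeq TE s = phi σ ∧
      parikh (projSeq TI s) = phi' σ := by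
  induction h with
  | nil m =>
      refine ⟨[], FireSeq.nil m, ?_, ?_⟩
      · simp [projSeq, phi]
      · funext u; simp [parikh, projSeq, phi']
  | @cons m m' m'' t y σ hE hy heq _ ih =>
      obtain ⟨sy, ⟨hTI, m₁, hfs, hen⟩, hpar⟩ := hy.1
      obtain ⟨s', hfs', hprojE, hprojI⟩ := ih
      -- the fired marking after sy ++ [t] equals m'
      have hm' : N.fire m₁ t = m' := by
        funext p
        have h1 : ((N.fire m₁ t) p : ℤ) = (m₁ p : ℤ) + N.inc p t := by
          simp only [fire, inc]
          push_cast [Nat.cast_sub (hen p)]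
          ring
        have h2 := marking_eq hfs p
        have h3 : ((N.fire m₁ t) p : ℤ) = (m' p : ℤ) := by
          rw [h1, h2, heq p]
          have : ∀ u, (sy.count u : ℤ) * N.inc p u = (y u : ℤ) * N.inc p u := by
            intro u; rw [← hpar]; rfl
          rw [Finset.sum_congr rfl (fun u _ => this u)]
        exact_mod_cast h3
      have htNotTI : t ∉ TI := Set.disjoint_left.mp hdisj hE
      have hsyNotTE : ∀ u ∈ sy, u ∉ TE :=
        fun u hu => Set.disjoint_right.mp hdisj (hTI u hu)
      refine ⟨sy ++ t :: s', ?_, ?_, ?_⟩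
      · exact fireSeq_append hfs (FireSeq.cons hen (hm' ▸ hfs'))
      · simp only [projSeq, List.filter_append, List.filter_cons]
        have : sy.filter (fun u => decide (u ∈ TE)) = [] := by
          rw [List.filter_eq_nil_iff]
          intro u hu; simpa using hsyNotTE u hu
        simpa [this, hE, phi, projSeq] using hprojE
      · funext u
        have hsyKeep : sy.filter (fun u => decide (u ∈ TI)) = sy := by
          rw [List.filter_eq_self]
          intro u hu; simpa using hTI u hu
        simp only [projSeq, List.filter_append, List.filter_cons, htNotTI,
          decide_eq_true_eq, if_neg htNotTI, hsyKeep]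
        have := congrFun hprojI u
        simp only [parikh, projSeq] at this ⊢
        simp [List.count_append, this, phi', ← hpar, parikh]

end PetriNet

/-- if the `T_I`-induced subnet is acyclic, every `σ ∈ L(G)` is realized by a
firing sequence `s ∈ L(N, m0)` with `P_E(s) = φ(σ)` and `π(P_I(s)) = φ'(σ)`. -/
theorem brg_sequence_realizable
    {P T A : Type} [Fintype T] [DecidableEq T]
    (N : PetriNet P T) (m0 : P → ℕ) (l : T → A) (TE TI : Set T)
    [DecidablePred (· ∈ TE)] [DecidablePred (· ∈ TI)]
    (hcover : TE ∪ TI = Set.univ) (hdisj : Disjoint TE TI)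
    (hacyc : N.SubnetAcyclic TI) :
    ∀ σ ∈ N.brgLang TE TI m0,
      ∃ s ∈ N.lang m0,
        PetriNet.projSeq TE s = PetriNet.phi σ ∧
          PetriNet.parikh (PetriNet.projSeq TI s) = PetriNet.phi' σ := by
  intro σ hσ
  obtain ⟨m', h⟩ := hσ
  obtain ⟨s, hfs, h1, h2⟩ := PetriNet.brg_realize N TE TI hdisj h
  exact ⟨s, ⟨m', hfs⟩, h1, h2⟩
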